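/- In QHC, if a proposition p is stable (i.e., ⊢ ¬!¬p → !p) then the problem !p is stable (i.e., ⊢ ¬¬!p → !p); and if ⊢ !p ∨ !¬p then ⊢ !p ∨ ¬!p. Conversely, for propositions of the form p = ?α, stability (resp. decidability) of the problem !p implies stability (resp. decidability) of p. These hold in strongly internalized form: ⊢ (¬!¬p → !p) → (¬¬!p → !p) and ⊢ (!p ∨ !¬p) → (!p ∨ ¬!p), with the converse implications derivable when p = ?α. -/
import Mathlib


/- Problem (intuitionistic) formulas and proposition (classical) formulas of QHC. -/
mutual
inductive PF : Type
  | var : Nat → PF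
  | bot : PF
  | and : PF → PF → PF
  | or : PF → PF → PF
  | imp : PF → PF → PF
  | bang : CF → PF
inductive CF : Type
  | var : Nat → CF
  | fls : CF
  | and : CF → CF → CF
  | or : CF → CF → CF
  | imp : CF → CF → CF
  | quest : PF → CF
end

def PF.neg (α : PF) : PF := α.imp PF.bot
def CF.neg (p : CF) : CF := p.imp CF.fls
def PF.iff (α β : PF) : PF := (α.imp β).and (β.imp α)
def CF.iff (p q : CF) : CF := (p.imp q).and (q.imp p)
def CF.box (p : CF) : CF := CF.quest (PF.bang p)
def PF.nabla (α : PF) : PF := PF.bang (CF.quest α)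

/- Derivability in QHC, parameterized by a set `Ax` of extra problem axioms
(used to treat the axiom ¬!0 and its variants uniformly). Intuitionistic logic
on problems, classical logic on propositions, the rules α ⊢ ?α and p ⊢ !p, and
the mixed axioms ?!p → p, α → !?α, !(p→q) → (!p → !q), ?(α→β) → (?α → ?β). -/
mutual
inductive ProvP (Ax : PF → Prop) : PF → Prop
  | axm {α} : Ax α → ProvP Ax α
  | mp {α β} : ProvP Ax (α.imp β) → ProvP Ax α → ProvP Ax β
  | ak (α β : PF) : ProvP Ax (α.imp (β.imp α))
  | as (α β γ : PF) : ProvP Ax ((α.imp (β.imp γ)).imp ((α.imp β).imp (α.imp γ)))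
  | andI (α β : PF) : ProvP Ax (α.imp (β.imp (α.and β)))
  | andE1 (α β : PF) : ProvP Ax ((α.and β).imp α)
  | andE2 (α β : PF) : ProvP Ax ((α.and β).imp β)
  | orI1 (α β : PF) : ProvP Ax (α.imp (α.or β))
  | orI2 (α β : PF) : ProvP Ax (β.imp (α.or β))
  | orE (α β γ : PF) : ProvP Ax ((α.imp γ).imp ((β.imp γ).imp ((α.or β).imp γ)))
  | exf (α : PF) : ProvP Ax (PF.bot.imp α)
  | bangIntro {p} : ProvC Ax p → ProvP Ax (PF.bang p)
  | bangImp (p q : CF) : ProvP Ax ((PF.bang (p.imp q)).imp ((PF.bang p).imp (PF.bang q)))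
  | bangQuest (α : PF) : ProvP Ax (α.imp (PF.bang (CF.quest α)))
inductive ProvC (Ax : PF → Prop) : CF → Prop
  | mp {p q} : ProvC Ax (p.imp q) → ProvC Ax p → ProvC Ax q
  | ak (p q : CF) : ProvC Ax (p.imp (q.imp p))
  | as (p q r : CF) : ProvC Ax ((p.imp (q.imp r)).imp ((p.imp q).imp (p.imp r)))
  | andI (p q : CF) : ProvC Ax (p.imp (q.imp (p.and q)))
  | andE1 (p q : CF) : ProvC Ax ((p.and q).imp p)
  | andE2 (p q : CF) : ProvC Ax ((p.and q).imp q)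
  | orI1 (p q : CF) : ProvC Ax (p.imp (p.or q))
  | orI2 (p q : CF) : ProvC Ax (q.imp (p.or q))
  | orE (p q r : CF) : ProvC Ax ((p.imp r).imp ((q.imp r).imp ((p.or q).imp r)))
  | exf (p : CF) : ProvC Ax (CF.fls.imp p)
  | lem (p : CF) : ProvC Ax (p.or (p.imp CF.fls))
  | questIntro {α} : ProvP Ax α → ProvC Ax (CF.quest α)
  | questImp (α β : PF) : ProvC Ax ((CF.quest (α.imp β)).imp ((CF.quest α).imp (CF.quest β)))
  | questBang (p : CF) : ProvC Ax ((CF.quest (PF.bang p)).imp p)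
end

/-- The axiom (!⊥): ¬!0. -/
def QHCAx : PF → Prop := fun α => α = (PF.bang CF.fls).imp PF.bot

/-- Derivability of a problem in QHC. -/
def PrvP (α : PF) : Prop := ProvP QHCAx α
/-- Derivability of a proposition in QHC. -/
def PrvC (p : CF) : Prop := ProvC QHCAx p

/-- Stability of the proposition p: ¬!¬p → !p. -/
def CF.stb (p : CF) : PF := (PF.neg (PF.bang (CF.neg p))).imp (PF.bang p)
/-- Stability of the problem !p: ¬¬!p → !p. -/
def CF.stbBang (p : CF) : PF := (PF.neg (PF.neg (PF.bang p))).imp (PF.bang p)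
/-- Decidability of the proposition p: !p ∨ !¬p. -/
def CF.dec (p : CF) : PF := (PF.bang p).or (PF.bang (CF.neg p))
/-- Decidability of the problem !p: !p ∨ ¬!p. -/
def CF.decBang (p : CF) : PF := (PF.bang p).or (PF.neg (PF.bang p))

/-! Auxiliary natural-deduction style infrastructure. -/

section Aux

variable {Ax : PF → Prop}

/-- Derivations from a list of problem hypotheses. -/
inductive Ded (Ax : PF → Prop) : List PF → PF → Prop
  | hyp {Γ α} : α ∈ Γ → Ded Ax Γ α
  | prv {Γ α} : ProvP Ax α → Ded Ax Γ α
  | mp {Γ α β} : Ded Ax Γ (α.imp β) → Ded Ax Γ α → Ded Ax Γ β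

/-- Derivations from a list of proposition hypotheses. -/
inductive DedC (Ax : PF → Prop) : List CF → CF → Prop
  | hyp {Γ p} : p ∈ Γ → DedC Ax Γ p
  | prv {Γ p} : ProvC Ax p → DedC Ax Γ p
  | mp {Γ p q} : DedC Ax Γ (p.imp q) → DedC Ax Γ p → DedC Ax Γ q

theorem ProvP.idem (α : PF) : ProvP Ax (α.imp α) :=
  .mp (.mp (.as α (α.imp α) α) (.ak α (α.imp α))) (.ak α α)

theorem ProvC.idem (p : CF) : ProvC Ax (p.imp p) :=
  .mp (.mp (.as p (p.imp p) p) (.ak p (p.imp p))) (.ak p p)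

theorem Ded.dedAux {Δ β} (h : Ded Ax Δ β) :
    ∀ {α Γ}, Δ = α :: Γ → Ded Ax Γ (α.imp β) := by
  induction h with
  | hyp hm =>
    intro α Γ hΔ; subst hΔ
    rcases List.mem_cons.mp hm with rfl | hm
    · exact .prv (ProvP.idem _)
    · exact .mp (.prv (.ak _ _)) (.hyp hm)
  | prv hp =>
    intro α Γ _; exact .mp (.prv (.ak _ _)) (.prv hp)
  | mp _ _ ih1 ih2 =>
    intro α Γ hΔ; exact .mp (.mp (.prv (.as _ _ _)) (ih1 hΔ)) (ih2 hΔ)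

theorem Ded.ded {Γ α β} (h : Ded Ax (α :: Γ) β) : Ded Ax Γ (α.imp β) :=
  h.dedAux rfl

theorem DedC.dedAux {Δ q} (h : DedC Ax Δ q) :
    ∀ {p Γ}, Δ = p :: Γ → DedC Ax Γ (p.imp q) := by
  induction h with
  | hyp hm =>
    intro p Γ hΔ; subst hΔ
    rcases List.mem_cons.mp hm with rfl | hm
    · exact .prv (ProvC.idem _)
    · exact .mp (.prv (.ak _ _)) (.hyp hm)
  | prv hp =>
    intro p Γ _; exact .mp (.prv (.ak _ _)) (.prv hp)
  | mp _ _ ih1 ih2 =>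
    intro p Γ hΔ; exact .mp (.mp (.prv (.as _ _ _)) (ih1 hΔ)) (ih2 hΔ)

theorem DedC.ded {Γ p q} (h : DedC Ax (p :: Γ) q) : DedC Ax Γ (p.imp q) :=
  h.dedAux rfl

theorem Ded.toProv {β} (h : Ded Ax ([] : List PF) β) : ProvP Ax β := by
  generalize hΓ : ([] : List PF) = Γ at h
  induction h with
  | hyp hm => subst hΓ; simp at hm
  | prv hp => exact hp
  | mp _ _ ih1 ih2 => exact .mp ih1 ih2

theorem DedC.toProv {q} (h : DedC Ax ([] : List CF) q) : ProvC Ax q := by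
  generalize hΓ : ([] : List CF) = Γ at h
  induction h with
  | hyp hm => subst hΓ; simp at hm
  | prv hp => exact hp
  | mp _ _ ih1 ih2 => exact .mp ih1 ih2

/-- Composition of provable problem implications. -/
theorem ProvP.pcomp {a b c : PF} (h1 : ProvP Ax (a.imp b)) (h2 : ProvP Ax (b.imp c)) :
    ProvP Ax (a.imp c) :=
  Ded.toProv (Ded.ded (.mp (.prv h2) (.mp (.prv h1) (.hyp (.head _)))))

/-- Composition of provable proposition implications. -/
theorem ProvC.ccomp {a b c : CF} (h1 : ProvC Ax (a.imp b)) (h2 : ProvC Ax (b.imp c)) :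
    ProvC Ax (a.imp c) :=
  DedC.toProv (DedC.ded (.mp (.prv h2) (.mp (.prv h1) (.hyp (.head _)))))

/-- Internal contraposition for problems. -/
theorem ProvP.contra (α β : PF) :
    ProvP Ax ((α.imp β).imp ((β.imp PF.bot).imp (α.imp PF.bot))) :=
  Ded.toProv <| Ded.ded <| Ded.ded <| Ded.ded <|
    .mp (.hyp (.tail _ (.head _)))
      (.mp (.hyp (.tail _ (.tail _ (.head _)))) (.hyp (.head _)))

end Aux

/-- The axiom ¬!⊥. -/
theorem axBangBot : PrvP ((PF.bang CF.fls).imp PF.bot) := ProvP.axm rfl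

/-- !¬p → ¬!p. -/
theorem lem1 (p : CF) : PrvP ((PF.bang (CF.neg p)).imp (PF.neg (PF.bang p))) :=
  Ded.toProv <| Ded.ded <| Ded.ded <|
    .mp (.prv axBangBot)
      (.mp (.mp (.prv (ProvP.bangImp p CF.fls)) (.hyp (.tail _ (.head _))))
        (.hyp (.head _)))

/-- ¬¬!p → ¬!¬p. -/
theorem lemCtoA (p : CF) :
    PrvP ((PF.neg (PF.neg (PF.bang p))).imp (PF.neg (PF.bang (CF.neg p)))) :=
  ProvP.mp (ProvP.contra (PF.bang (CF.neg p)) (PF.neg (PF.bang p))) (lem1 p)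

/-- ?⊥ → ⊥. -/
theorem lemQBot : PrvC ((CF.quest PF.bot).imp CF.fls) :=
  ProvC.ccomp
    (ProvC.mp (ProvC.questImp PF.bot (PF.bang CF.fls))
      (ProvC.questIntro (ProvP.exf (PF.bang CF.fls))))
    (ProvC.questBang CF.fls)

/-- ?¬α → ¬?α. -/
theorem lemQNeg (α : PF) : PrvC ((CF.quest (PF.neg α)).imp (CF.neg (CF.quest α))) :=
  DedC.toProv <| DedC.ded <| DedC.ded <|
    .mp (.prv lemQBot)
      (.mp (.mp (.prv (ProvC.questImp α PF.bot)) (.hyp (.tail _ (.head _))))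
        (.hyp (.head _)))

/-- ¬!?α → !¬?α. -/
theorem lem2 (α : PF) :
    PrvP ((PF.neg (PF.bang (CF.quest α))).imp (PF.bang (CF.neg (CF.quest α)))) :=
  ProvP.pcomp
    (ProvP.mp (ProvP.contra α (PF.bang (CF.quest α))) (ProvP.bangQuest α))
    (ProvP.pcomp (ProvP.bangQuest (PF.neg α))
      (ProvP.mp (ProvP.bangImp (CF.quest (PF.neg α)) (CF.neg (CF.quest α)))
        (ProvP.bangIntro (lemQNeg α))))

/-- ¬!¬?α → ¬¬!?α. -/
theorem lemAtoC (α : PF) :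
    PrvP ((PF.neg (PF.bang (CF.neg (CF.quest α)))).imp
      (PF.neg (PF.neg (PF.bang (CF.quest α))))) :=
  ProvP.mp (ProvP.contra (PF.neg (PF.bang (CF.quest α))) (PF.bang (CF.neg (CF.quest α))))
    (lem2 α)

theorem goal3 (p : CF) : PrvP ((CF.stb p).imp (CF.stbBang p)) :=
  Ded.toProv <| Ded.ded <| Ded.ded <|
    .mp (.hyp (.tail _ (.head _))) (.mp (.prv (lemCtoA p)) (.hyp (.head _)))

theorem goal4 (p : CF) : PrvP ((CF.dec p).imp (CF.decBang p)) :=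
  ProvP.mp (ProvP.mp (ProvP.orE _ _ _) (ProvP.orI1 _ _))
    (ProvP.pcomp (lem1 p) (ProvP.orI2 _ _))

theorem goal5 (α : PF) : PrvP ((CF.stbBang (CF.quest α)).imp (CF.stb (CF.quest α))) :=
  Ded.toProv <| Ded.ded <| Ded.ded <|
    .mp (.hyp (.tail _ (.head _))) (.mp (.prv (lemAtoC α)) (.hyp (.head _)))

theorem goal6 (α : PF) : PrvP ((CF.decBang (CF.quest α)).imp (CF.dec (CF.quest α))) :=
  ProvP.mp (ProvP.mp (ProvP.orE _ _ _) (ProvP.orI1 _ _))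
    (ProvP.pcomp (lem2 α) (ProvP.orI2 _ _))

theorem qhc_stable_decidable :
    (∀ p : CF, PrvP (CF.stb p) → PrvP (CF.stbBang p)) ∧
    (∀ p : CF, PrvP (CF.dec p) → PrvP (CF.decBang p)) ∧
    (∀ p : CF, PrvP ((CF.stb p).imp (CF.stbBang p))) ∧
    (∀ p : CF, PrvP ((CF.dec p).imp (CF.decBang p))) ∧
    (∀ α : PF, PrvP ((CF.stbBang (CF.quest α)).imp (CF.stb (CF.quest α)))) ∧
    (∀ α : PF, PrvP ((CF.decBang (CF.quest α)).imp (CF.dec (CF.quest α)))) :=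
  ⟨fun p h => ProvP.mp (goal3 p) h, fun p h => ProvP.mp (goal4 p) h,
   goal3, goal4, goal5, goal6⟩
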